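/- Let h : [0,∞) → ℝ be twice continuously differentiable, γ₁, γ₂ > 0, and define ψ₁ = h' + γ₁h. If h(0) ≥ 0, ψ₁(0) ≥ 0, and ψ₁'(t) + γ₂ψ₁(t) ≥ 0 for all t ≥ 0, then h(t) ≥ 0 for all t ≥ 0. -/

import Mathlib

lemma hocbf_aux (f f' : ℝ → ℝ) (γ : ℝ)
    (hd : ∀ t, HasDerivAt f (f' t) t)
    (h0 : 0 ≤ f 0)
    (hineq : ∀ t ∈ Set.Ici (0 : ℝ), 0 ≤ f' t + γ * f t) :
    ∀ t ∈ Set.Ici (0 : ℝ), 0 ≤ f t := by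
  set g : ℝ → ℝ := fun t => f t * Real.exp (γ * t) with hg
  have hgd : ∀ t, HasDerivAt g ((f' t + γ * f t) * Real.exp (γ * t)) t := by
    intro t
    have he : HasDerivAt (fun t : ℝ => Real.exp (γ * t)) (Real.exp (γ * t) * γ) t := by
      simpa using ((hasDerivAt_id t).const_mul γ).exp
    have : HasDerivAt (fun t => f t * Real.exp (γ * t)) (f' t * Real.exp (γ * t) + f t * (Real.exp (γ * t) * γ)) t := (hd t).mul he
    convert this using 1
    ring
  have hmono : MonotoneOn g (Set.Ici 0) := by
    apply monotoneOn_of_deriv_nonneg (convex_Ici 0)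
    · exact fun x _ => (hgd x).continuousAt.continuousWithinAt
    · intro x _
      exact (hgd x).differentiableAt.differentiableWithinAt
    · intro x hx
      rw [interior_Ici] at hx
      rw [(hgd x).deriv]
      exact mul_nonneg (hineq x (Set.mem_Ici.mpr (le_of_lt hx))) (Real.exp_pos _).le
  intro t ht
  have := hmono (Set.self_mem_Ici) ht ht
  have hg0 : g 0 = f 0 := by simp [hg]
  have hgt : g t = f t * Real.exp (γ * t) := rfl
  nlinarith [Real.exp_pos (γ * t), this, hg0 ▸ h0]

theorem hocbf_order_two_nonneg
    (h h' h'' : ℝ → ℝ) (γ₁ γ₂ : ℝ) (hγ₁ : 0 < γ₁) (hγ₂ : 0 < γ₂)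
    (hd1 : ∀ t, HasDerivAt h (h' t) t)
    (hd2 : ∀ t, HasDerivAt h' (h'' t) t)
    (hcont : Continuous h'')
    (h0 : h 0 ≥ 0)
    (hψ0 : h' 0 + γ₁ * h 0 ≥ 0)
    (hψ2 : ∀ t ∈ Set.Ici (0 : ℝ),
      (h'' t + γ₁ * h' t) + γ₂ * (h' t + γ₁ * h t) ≥ 0) :
    ∀ t ∈ Set.Ici (0 : ℝ), h t ≥ 0 := by
  have hψ1 : ∀ t ∈ Set.Ici (0 : ℝ), 0 ≤ h' t + γ₁ * h t := by
    apply hocbf_aux (fun t => h' t + γ₁ * h t) (fun t => h'' t + γ₁ * h' t) γ₂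
    · intro t
      exact (hd2 t).add ((hd1 t).const_mul γ₁)
    · exact hψ0
    · intro t ht
      exact hψ2 t ht
  exact hocbf_aux h h' γ₁ hd1 h0 hψ1
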